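/- Fix g ≥ 1 and indices i, j, k, l, m ∈ {1,…,g}. There exists a universal polynomial P in the partial derivatives of σ of order at most 5 such that for every infinitely complex-differentiable σ : ℂ^g → ℂ and every u with σ(u) ≠ 0, σ(u)⁴ · (℘_{ijklm}(u) + ℘_{ij}(u)℘_{klm}(u) − 13℘_{lm}(u)℘_{ijk}(u)) = P evaluated at the partial derivatives of σ at u. In particular this five-index combination, whose individual terms have poles of order five along the zero set of σ, has poles of order at most four there. -/

import Mathlib

noncomputable section

/-- Partial derivative in the `i`-th coordinate direction. -/
def pd {g : ℕ} (i : Fin g) (f : (Fin g → ℂ) → ℂ) : (Fin g → ℂ) → ℂ :=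
  fun u => fderiv ℂ f u (Pi.single i 1)

/-- Iterated partial derivative along a list of coordinate indices. -/
def pdIter {g : ℕ} (l : List (Fin g)) (f : (Fin g → ℂ) → ℂ) : (Fin g → ℂ) → ℂ :=
  l.foldl (fun h i => pd i h) f

/-- The 2-index Kleinian ℘-function ℘_{ij} = (σ_i σ_j − σ σ_{ij}) / σ². -/
def wp2 {g : ℕ} (σ : (Fin g → ℂ) → ℂ) (i j : Fin g) : (Fin g → ℂ) → ℂ :=
  fun u => (pd i σ u * pd j σ u - σ u * pd j (pd i σ) u) / σ u ^ 2

/-- The m-index Kleinian ℘-function ℘_{i j k₁ ⋯ k_r}, obtained from ℘_{ij} by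
successively differentiating with respect to the coordinates in `ks`. -/
def wp {g : ℕ} (σ : (Fin g → ℂ) → ℂ) (i j : Fin g) (ks : List (Fin g)) :
    (Fin g → ℂ) → ℂ :=
  ks.foldl (fun h k => pd k h) (wp2 σ i j)

namespace St8

variable {g : ℕ}

lemma contDiff_pd (a : Fin g) {f : (Fin g → ℂ) → ℂ} (hf : ContDiff ℂ ⊤ f) :
    ContDiff ℂ ⊤ (pd a f) :=
  (hf.fderiv_right le_top).clm_apply contDiff_const

lemma contDiff_pdIter {f : (Fin g → ℂ) → ℂ} (hf : ContDiff ℂ ⊤ f) :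
    ∀ L : List (Fin g), ContDiff ℂ ⊤ (pdIter L f) := by
  intro L
  induction L generalizing f with
  | nil => exact hf
  | cons a L ih => exact ih (contDiff_pd a hf)

lemma pd_add {f h : (Fin g → ℂ) → ℂ} {u : Fin g → ℂ} (a : Fin g)
    (hf : DifferentiableAt ℂ f u) (hh : DifferentiableAt ℂ h u) :
    pd a (fun v => f v + h v) u = pd a f u + pd a h u := by
  simp [pd, fderiv_fun_add hf hh]

lemma pd_mul {f h : (Fin g → ℂ) → ℂ} {u : Fin g → ℂ} (a : Fin g)
    (hf : DifferentiableAt ℂ f u) (hh : DifferentiableAt ℂ h u) :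
    pd a (fun v => f v * h v) u = pd a f u * h u + f u * pd a h u := by
  simp [pd, fderiv_fun_mul hf hh, smul_eq_mul]
  ring

/-- Deep embedding of polynomial expressions in the partial derivatives of σ. -/
inductive Expr (g : ℕ) : Type where
  | var : List (Fin g) → Expr g
  | const : ℚ → Expr g
  | add : Expr g → Expr g → Expr g
  | mul : Expr g → Expr g → Expr g

namespace Expr

def eval (σ : (Fin g → ℂ) → ℂ) : Expr g → (Fin g → ℂ) → ℂ
  | var L => pdIter L σ
  | const q => fun _ => (q : ℂ)
  | add e₁ e₂ => fun u => eval σ e₁ u + eval σ e₂ u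
  | mul e₁ e₂ => fun u => eval σ e₁ u * eval σ e₂ u

def D (a : Fin g) : Expr g → Expr g
  | var L => var (L ++ [a])
  | const _ => const 0
  | add e₁ e₂ => add (D a e₁) (D a e₂)
  | mul e₁ e₂ => add (mul (D a e₁) e₂) (mul e₁ (D a e₂))

def deg : Expr g → ℕ
  | var L => L.length
  | const _ => 0
  | add e₁ e₂ => max (deg e₁) (deg e₂)
  | mul e₁ e₂ => max (deg e₁) (deg e₂)

def toPoly : Expr g → MvPolynomial {α : List (Fin g) // α.length ≤ 5} ℚ
  | var L => if h : L.length ≤ 5 then MvPolynomial.X ⟨L, h⟩ else 0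
  | const q => MvPolynomial.C q
  | add e₁ e₂ => toPoly e₁ + toPoly e₂
  | mul e₁ e₂ => toPoly e₁ * toPoly e₂

def sub (e₁ e₂ : Expr g) : Expr g := add e₁ (mul (const (-1)) e₂)

lemma eval_contDiff {σ : (Fin g → ℂ) → ℂ} (hσ : ContDiff ℂ ⊤ σ) :
    ∀ e : Expr g, ContDiff ℂ ⊤ (eval σ e)
  | var L => contDiff_pdIter hσ L
  | const _ => contDiff_const
  | add e₁ e₂ => (eval_contDiff hσ e₁).add (eval_contDiff hσ e₂)
  | mul e₁ e₂ => (eval_contDiff hσ e₁).mul (eval_contDiff hσ e₂)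

lemma pd_eval {σ : (Fin g → ℂ) → ℂ} (hσ : ContDiff ℂ ⊤ σ) (a : Fin g) :
    ∀ e : Expr g, pd a (eval σ e) = eval σ (D a e)
  | var L => by
      funext v
      simp [eval, D, pdIter, List.foldl_append]
  | const q => by
      funext v
      simp [eval, D, pd]
  | add e₁ e₂ => by
      funext v
      have h₁ := ((eval_contDiff hσ e₁).differentiable (by simp)).differentiableAt (x := v)
      have h₂ := ((eval_contDiff hσ e₂).differentiable (by simp)).differentiableAt (x := v)
      have : pd a (fun w => eval σ e₁ w + eval σ e₂ w) v
          = pd a (eval σ e₁) v + pd a (eval σ e₂) v := pd_add a h₁ h₂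
      simpa [eval, D, pd_eval hσ a e₁, pd_eval hσ a e₂] using this
  | mul e₁ e₂ => by
      funext v
      have h₁ := ((eval_contDiff hσ e₁).differentiable (by simp)).differentiableAt (x := v)
      have h₂ := ((eval_contDiff hσ e₂).differentiable (by simp)).differentiableAt (x := v)
      have : pd a (fun w => eval σ e₁ w * eval σ e₂ w) v
          = pd a (eval σ e₁) v * eval σ e₂ v + eval σ e₁ v * pd a (eval σ e₂) v :=
        pd_mul a h₁ h₂
      simpa [eval, D, pd_eval hσ a e₁, pd_eval hσ a e₂] using this

lemma aeval_toPoly (σ : (Fin g → ℂ) → ℂ) (u : Fin g → ℂ) :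
    ∀ e : Expr g, deg e ≤ 5 →
      MvPolynomial.aeval
        (fun v : {α : List (Fin g) // α.length ≤ 5} => pdIter v.1 σ u) (toPoly e)
      = eval σ e u
  | var L, h => by
      have hL : L.length ≤ 5 := h
      simp [toPoly, eval, dif_pos hL]
  | const q, _ => by
      simp [toPoly, eval]
  | add e₁ e₂, h => by
      have h₁ : deg e₁ ≤ 5 := le_trans (le_max_left _ _) h
      have h₂ : deg e₂ ≤ 5 := le_trans (le_max_right _ _) h
      simp [toPoly, eval, aeval_toPoly σ u e₁ h₁, aeval_toPoly σ u e₂ h₂]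
  | mul e₁ e₂, h => by
      have h₁ : deg e₁ ≤ 5 := le_trans (le_max_left _ _) h
      have h₂ : deg e₂ ≤ 5 := le_trans (le_max_right _ _) h
      simp [toPoly, eval, aeval_toPoly σ u e₁ h₁, aeval_toPoly σ u e₂ h₂]

end Expr

open Expr

/-- numerator of ℘_{ij} -/
def en0 (i j : Fin g) : Expr g := sub (mul (var [i]) (var [j])) (mul (var []) (var [i, j]))

/-- numerator of ℘_{ijk} (over σ³) -/
def en1 (i j k : Fin g) : Expr g :=
  sub (mul ((en0 i j).D k) (var [])) (mul (const 2) (mul (en0 i j) (var [k])))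

/-- numerator of ℘_{ijkl} (over σ⁴) -/
def en2 (i j k l : Fin g) : Expr g :=
  sub (mul ((en1 i j k).D l) (var [])) (mul (const 3) (mul (en1 i j k) (var [l])))

/-- numerator of ℘_{ijklm} (over σ⁵) -/
def en3 (i j k l m : Fin g) : Expr g :=
  sub (mul ((en2 i j k l).D m) (var [])) (mul (const 4) (mul (en2 i j k l) (var [m])))

def eA0 (i j : Fin g) : Expr g := mul (const (-1)) (var [i, j])

def ep0 (i j : Fin g) : Expr g := mul (var [i]) (var [j])

def eA1 (i j k : Fin g) : Expr g :=
  Expr.add (mul (var []) ((eA0 i j).D k)) (sub ((ep0 i j).D k) (mul (eA0 i j) (var [k])))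

def ep1 (i j k : Fin g) : Expr g := mul (const (-2)) (mul (ep0 i j) (var [k]))

def eA2 (i j k l : Fin g) : Expr g :=
  Expr.add (mul (var []) ((eA1 i j k).D l))
    (sub ((ep1 i j k).D l) (mul (const 2) (mul (eA1 i j k) (var [l]))))

def ep2 (i j k l : Fin g) : Expr g := mul (const (-3)) (mul (ep1 i j k) (var [l]))

def eA3 (i j k l m : Fin g) : Expr g :=
  Expr.add (mul (var []) ((eA2 i j k l).D m))
    (sub ((ep2 i j k l).D m) (mul (const 3) (mul (eA2 i j k l) (var [m]))))

/-- The universal polynomial expression: `E = σ · eAfin` where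
`E = n3 + n0·m1 − 13·q0·n1`. -/
def eAfin (i j k l m : Fin g) : Expr g :=
  Expr.add (eA3 i j k l m) <|
  Expr.add (mul (var []) (mul (eA0 i j) (eA1 k l m))) <|
  Expr.add (mul (eA0 i j) (ep1 k l m)) <|
  Expr.add (mul (ep0 i j) (eA1 k l m)) <|
  mul (const (-13))
    (Expr.add (mul (var []) (mul (eA0 l m) (eA1 i j k)))
      (Expr.add (mul (eA0 l m) (ep1 i j k)) (mul (ep0 l m) (eA1 i j k))))

lemma wp2_eq (σ : (Fin g → ℂ) → ℂ) (i j : Fin g) (v : Fin g → ℂ) :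
    wp2 σ i j v = Expr.eval σ (en0 i j) v / σ v ^ 2 := by
  simp [wp2, en0, Expr.sub, Expr.eval, pdIter]
  ring

/-- The key analytic step: differentiating `N/σ^(n+1)` gives
`(N' σ − (n+1) N σ')/σ^(n+2)`. -/
lemma pd_step {σ N F : (Fin g → ℂ) → ℂ} (hσ : ContDiff ℂ ⊤ σ)
    (hN : Differentiable ℂ N) (n : ℕ)
    (hF : ∀ w, σ w ≠ 0 → F w = N w / σ w ^ (n + 1)) (a : Fin g) :
    ∀ v, σ v ≠ 0 →
      pd a F v = (pd a N v * σ v - (n + 1) * N v * pd a σ v) / σ v ^ (n + 2) := by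
  intro v hv
  have hσd : Differentiable ℂ σ := hσ.differentiable (by simp)
  set G : (Fin g → ℂ) → ℂ := fun w => N w / σ w ^ (n + 1) with hG
  -- F and G agree near v
  have hop : IsOpen {w : Fin g → ℂ | σ w ≠ 0} := by
    have : {w : Fin g → ℂ | σ w ≠ 0} = σ ⁻¹' ({0}ᶜ) := rfl
    rw [this]
    exact (isOpen_compl_singleton).preimage hσd.continuous
  have hFG : F =ᶠ[nhds v] G :=
    Filter.eventuallyEq_of_mem (hop.mem_nhds hv) (fun w hw => hF w hw)
  have hpdFG : pd a F v = pd a G v := by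
    simp only [pd, hFG.fderiv_eq]
  -- G is differentiable at v
  have hGd : DifferentiableAt ℂ G v := by
    have : DifferentiableAt ℂ (fun w => N w * (σ w ^ (n + 1))⁻¹) v :=
      (hN v).mul ((((hσd v).pow (n + 1))).inv (pow_ne_zero _ hv))
    simpa [hG, div_eq_mul_inv] using this
  -- restrict to the line through v in direction e
  set e : Fin g → ℂ := Pi.single a 1 with he
  have hline : HasDerivAt (fun t : ℂ => v + t • e) e 0 := by
    simpa using ((hasDerivAt_id (0 : ℂ)).smul_const e).const_add v
  have hl0 : v + (0 : ℂ) • e = v := by simp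
  have hN0 : HasFDerivAt N (fderiv ℂ N v) (v + (0 : ℂ) • e) := by
    rw [hl0]; exact (hN v).hasFDerivAt
  have hσ0 : HasFDerivAt σ (fderiv ℂ σ v) (v + (0 : ℂ) • e) := by
    rw [hl0]; exact (hσd v).hasFDerivAt
  have hG0 : HasFDerivAt G (fderiv ℂ G v) (v + (0 : ℂ) • e) := by
    rw [hl0]; exact hGd.hasFDerivAt
  have hNl : HasDerivAt (fun t : ℂ => N (v + t • e)) (fderiv ℂ N v e) 0 :=
    hN0.comp_hasDerivAt 0 hline
  have hσl : HasDerivAt (fun t : ℂ => σ (v + t • e)) (fderiv ℂ σ v e) 0 :=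
    hσ0.comp_hasDerivAt 0 hline
  have hGl : HasDerivAt (fun t : ℂ => N (v + t • e) / σ (v + t • e) ^ (n + 1))
      (fderiv ℂ G v e) 0 := by have := hG0.comp_hasDerivAt 0 hline; exact this
  have hpow := hσl.pow (n + 1)
  have hne : σ (v + (0 : ℂ) • e) ^ (n + 1) ≠ 0 := by
    rw [hl0]; exact pow_ne_zero _ hv
  have hdiv := hNl.div hpow hne
  have huniq := hGl.unique hdiv
  rw [hl0] at huniq
  have hpdG : pd a G v = fderiv ℂ G v e := by rw [he]; rfl
  have hpdN : pd a N v = fderiv ℂ N v e := by rw [he]; rfl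
  have hpdσ : pd a σ v = fderiv ℂ σ v e := by rw [he]; rfl
  rw [hpdFG, hpdG, huniq, ← hpdN, ← hpdσ]
  simp only [Nat.add_sub_cancel, Pi.pow_apply, hl0]
  push_cast
  field_simp
  ring

end St8

open St8 St8.Expr

/-- there is a universal polynomial P in the partial derivatives of σ of
order at most 5 such that σ⁴·(℘_{ijklm} + ℘_{ij}℘_{klm} − 13℘_{lm}℘_{ijk}) = P(∂^α σ);
in particular this five-index combination has poles of order at most four. -/
theorem statement8 {g : ℕ} (hg : 1 ≤ g) (i j k l m : Fin g) :
    ∃ P : MvPolynomial {α : List (Fin g) // α.length ≤ 5} ℚ,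
      ∀ σ : (Fin g → ℂ) → ℂ, ContDiff ℂ ⊤ σ → ∀ u : Fin g → ℂ, σ u ≠ 0 →
        σ u ^ 4 * (wp σ i j [k, l, m] u + wp2 σ i j u * wp σ k l [m] u
            - 13 * wp2 σ l m u * wp σ i j [k] u)
          = MvPolynomial.aeval (fun v : {α : List (Fin g) // α.length ≤ 5} =>
              pdIter v.1 σ u) P := by
  refine ⟨(eAfin i j k l m).toPoly, ?_⟩
  intro σ hσ u hu
  have hdeg : (eAfin i j k l m).deg ≤ 5 := by
    simp [eAfin, eA3, eA2, eA1, eA0, ep2, ep1, ep0, Expr.sub, Expr.D, Expr.deg]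
  -- the chain of quotient representations
  have h1 : ∀ v, σ v ≠ 0 → wp σ i j [k] v = Expr.eval σ (en1 i j k) v / σ v ^ 3 := by
    have := pd_step hσ ((eval_contDiff hσ (en0 i j)).differentiable (by simp)) 1
      (fun w hw => wp2_eq σ i j w) k
    intro v hv
    have h := this v hv
    rw [show wp σ i j [k] = pd k (wp2 σ i j) from rfl, h, pd_eval hσ k (en0 i j)]
    norm_num [en1, Expr.sub, Expr.eval, pdIter]
    ring
  have h2 : ∀ v, σ v ≠ 0 → wp σ i j [k, l] v = Expr.eval σ (en2 i j k l) v / σ v ^ 4 := by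
    have := pd_step hσ ((eval_contDiff hσ (en1 i j k)).differentiable (by simp)) 2
      (fun w hw => by simpa using h1 w hw) l
    intro v hv
    have h := this v hv
    rw [show wp σ i j [k, l] = pd l (wp σ i j [k]) from rfl, h, pd_eval hσ l (en1 i j k)]
    norm_num [en2, Expr.sub, Expr.eval, pdIter]
    ring
  have h3 : ∀ v, σ v ≠ 0 →
      wp σ i j [k, l, m] v = Expr.eval σ (en3 i j k l m) v / σ v ^ 5 := by
    have := pd_step hσ ((eval_contDiff hσ (en2 i j k l)).differentiable (by simp)) 3
      (fun w hw => by simpa using h2 w hw) m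
    intro v hv
    have h := this v hv
    rw [show wp σ i j [k, l, m] = pd m (wp σ i j [k, l]) from rfl, h,
      pd_eval hσ m (en2 i j k l)]
    norm_num [en3, Expr.sub, Expr.eval, pdIter]
    ring
  have hm1 : ∀ v, σ v ≠ 0 → wp σ k l [m] v = Expr.eval σ (en1 k l m) v / σ v ^ 3 := by
    have := pd_step hσ ((eval_contDiff hσ (en0 k l)).differentiable (by simp)) 1
      (fun w hw => wp2_eq σ k l w) m
    intro v hv
    have h := this v hv
    rw [show wp σ k l [m] = pd m (wp2 σ k l) from rfl, h, pd_eval hσ m (en0 k l)]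
    norm_num [en1, Expr.sub, Expr.eval, pdIter]
    ring
  -- the key algebraic identity (verified by `ring`)
  have key : Expr.eval σ (en3 i j k l m) u
      + Expr.eval σ (en0 i j) u * Expr.eval σ (en1 k l m) u
      - 13 * Expr.eval σ (en0 l m) u * Expr.eval σ (en1 i j k) u
      = σ u * Expr.eval σ (eAfin i j k l m) u := by
    simp only [en3, en2, en1, en0, eAfin, eA3, eA2, eA1, eA0, ep2, ep1, ep0,
      Expr.sub, Expr.D, Expr.eval, pdIter, List.foldl_cons, List.foldl_nil,
      List.cons_append, List.nil_append, Rat.cast_ofNat, Rat.cast_neg, Rat.cast_one]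
    ring
  rw [h3 u hu, hm1 u hu, h1 u hu, wp2_eq σ i j u, wp2_eq σ l m u,
    aeval_toPoly σ u _ hdeg]
  have expand : σ u ^ 4 * (Expr.eval σ (en3 i j k l m) u / σ u ^ 5
        + Expr.eval σ (en0 i j) u / σ u ^ 2 * (Expr.eval σ (en1 k l m) u / σ u ^ 3)
        - 13 * (Expr.eval σ (en0 l m) u / σ u ^ 2) * (Expr.eval σ (en1 i j k) u / σ u ^ 3))
      = (Expr.eval σ (en3 i j k l m) u
          + Expr.eval σ (en0 i j) u * Expr.eval σ (en1 k l m) u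
          - 13 * Expr.eval σ (en0 l m) u * Expr.eval σ (en1 i j k) u) / σ u ^ 5 * σ u ^ 4 := by
    ring
  rw [expand, key]
  field_simp
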